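/- Let α > 1 and let (t₀, x₀) satisfy x₀ > 1 + 2/α and |1 + t₀x₀| < e^{-x₀}. Define G(x) = -(α + 1)(x - x₀) - x₀e^{-x} + (1 + t₀x₀)x. Then G(1) > 0, G(x₀) < 0, G is strictly concave (G''(x) = -x₀e^{-x} < 0), and there exists a unique x ∈ (1, x₀) with G(x) = 0. -/

import Mathlib

open Real Set

/-- Properties of `G(x) = -(α+1)(x-x₀) - x₀ e^{-x} + (1+t₀x₀)x` giving the unique
intersection of the leftgoing lightlike geodesic of `g^α` from `(t₀,x₀)` with `γ₊`. -/
theorem leftgoing_intersection (α t₀ x₀ : ℝ) (hα : 1 < α)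
    (hx₀ : 1 + 2 / α < x₀)
    (hU : |1 + t₀ * x₀| < Real.exp (-x₀)) :
    (fun x : ℝ => -(α + 1) * (x - x₀) - x₀ * Real.exp (-x) + (1 + t₀ * x₀) * x) 1 > 0 ∧
    (fun x : ℝ => -(α + 1) * (x - x₀) - x₀ * Real.exp (-x) + (1 + t₀ * x₀) * x) x₀ < 0 ∧
    StrictConcaveOn ℝ univ
      (fun x : ℝ => -(α + 1) * (x - x₀) - x₀ * Real.exp (-x) + (1 + t₀ * x₀) * x) ∧
    (∀ x : ℝ, deriv (deriv
      (fun x : ℝ => -(α + 1) * (x - x₀) - x₀ * Real.exp (-x) + (1 + t₀ * x₀) * x)) x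
        = -x₀ * Real.exp (-x)) ∧
    ∃! x : ℝ, x ∈ Ioo (1 : ℝ) x₀ ∧
      -(α + 1) * (x - x₀) - x₀ * Real.exp (-x) + (1 + t₀ * x₀) * x = 0 := by
  set G : ℝ → ℝ := fun x : ℝ => -(α + 1) * (x - x₀) - x₀ * Real.exp (-x) + (1 + t₀ * x₀) * x
    with hGdef
  have hα0 : (0:ℝ) < α := by linarith
  have hx1 : (1:ℝ) < x₀ := by
    have : 0 < 2 / α := by positivity
    linarith
  have hx0pos : (0:ℝ) < x₀ := by linarith
  have habs := abs_lt.mp hU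
  have haux : 2 < α * (x₀ - 1) := by
    have h2 : 2 / α < x₀ - 1 := by linarith
    calc 2 = α * (2 / α) := by field_simp
    _ < α * (x₀ - 1) := by exact (mul_lt_mul_iff_right₀ hα0).mpr h2
  have hexp1 : Real.exp (-1) < 0.38 := by
    rw [Real.exp_neg]
    rw [inv_lt_iff_one_lt_mul₀ (Real.exp_pos 1)]
    nlinarith [Real.exp_one_gt_d9]
  have hexpx₀ : Real.exp (-x₀) < Real.exp (-1) := by
    apply Real.exp_lt_exp.mpr; linarith
  -- G 1 > 0
  have hG1 : G 1 > 0 := by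
    simp only [hGdef]
    nlinarith [Real.exp_pos (-(1:ℝ)), habs.1, hexpx₀, hexp1]
  -- G x₀ < 0
  have hGx₀ : G x₀ < 0 := by
    simp only [hGdef]
    nlinarith [habs.2]
  -- derivative facts
  have hexp' : ∀ x : ℝ, HasDerivAt (fun y : ℝ => Real.exp (-y)) (-Real.exp (-x)) x := by
    intro x
    simpa [Function.comp_def] using (Real.hasDerivAt_exp (-x)).comp x (hasDerivAt_neg x)
  have hG' : ∀ x : ℝ, HasDerivAt G (-(α + 1) + x₀ * Real.exp (-x) + (1 + t₀ * x₀)) x := by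
    intro x
    have h1 : HasDerivAt (fun y : ℝ => -(α + 1) * (y - x₀)) (-(α + 1)) x := by
      simpa using ((hasDerivAt_id x).sub_const x₀).const_mul (-(α + 1))
    have h2 : HasDerivAt (fun y : ℝ => x₀ * Real.exp (-y)) (x₀ * -Real.exp (-x)) x :=
      (hexp' x).const_mul x₀
    have h3 : HasDerivAt (fun y : ℝ => (1 + t₀ * x₀) * y) (1 + t₀ * x₀) x := by
      simpa using (hasDerivAt_id x).const_mul (1 + t₀ * x₀)
    have := (h1.sub h2).add h3
    exact this.congr_deriv (by ring)
  have hderivG : deriv G = fun x : ℝ => -(α + 1) + x₀ * Real.exp (-x) + (1 + t₀ * x₀) :=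
    funext fun x => (hG' x).deriv
  have hderiv2 : ∀ x : ℝ, deriv (deriv G) x = -x₀ * Real.exp (-x) := by
    intro x
    rw [hderivG]
    have h2 : HasDerivAt (fun y : ℝ => -(α + 1) + x₀ * Real.exp (-y) + (1 + t₀ * x₀))
        (-x₀ * Real.exp (-x)) x := by
      have := ((hexp' x).const_mul x₀).const_add (-(α + 1))
      have := this.add_const (1 + t₀ * x₀)
      exact this.congr_deriv (by ring)
    exact h2.deriv
  -- strict concavity
  have hconc : StrictConcaveOn ℝ univ G := by
    constructor
    · exact convex_univ
    · intro x _ y _ hxy a b ha hb hab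
      simp only [smul_eq_mul, hGdef]
      have hne : (-x : ℝ) ≠ -y := by simpa using hxy
      have hkey := strictConvexOn_exp.2 (mem_univ (-x)) (mem_univ (-y)) hne ha hb hab
      simp only [smul_eq_mul] at hkey
      have heq : a * -x + b * -y = -(a * x + b * y) := by ring
      rw [heq] at hkey
      nlinarith [hkey, hx0pos]
  refine ⟨hG1, hGx₀, hconc, hderiv2, ?_⟩
  -- existence
  have hcont : ContinuousOn G (Icc 1 x₀) := by
    apply Continuous.continuousOn
    fun_prop
  have hiv := intermediate_value_Ioo' (le_of_lt hx1) hcont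
  have h0mem : (0:ℝ) ∈ Ioo (G x₀) (G 1) := ⟨hGx₀, hG1⟩
  obtain ⟨c, hcmem, hc⟩ := hiv h0mem
  -- uniqueness helper
  have key : ∀ c d : ℝ, c ∈ Ioo (1:ℝ) x₀ → d ∈ Ioo (1:ℝ) x₀ → G c = 0 → G d = 0 →
      c < d → False := by
    intro c d hcm hdm hGc hGd hcd
    have hd1 : (1:ℝ) < d := hdm.1
    set a : ℝ := (d - c) / (d - 1) with hadef
    set b : ℝ := (c - 1) / (d - 1) with hbdef
    have hden : (0:ℝ) < d - 1 := by linarith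
    have ha : 0 < a := by apply div_pos; linarith; exact hden
    have hb : 0 < b := by apply div_pos; linarith [hcm.1]; exact hden
    have hne0 : d - 1 ≠ 0 := ne_of_gt hden
    have hab : a + b = 1 := by
      rw [hadef, hbdef, ← add_div, div_eq_one_iff_eq hne0]; ring
    have h1d : (1:ℝ) ≠ d := by linarith
    have := hconc.2 (mem_univ (1:ℝ)) (mem_univ d) h1d ha hb hab
    simp only [smul_eq_mul] at this
    have hcomb : a * 1 + b * d = c := by
      rw [hadef, hbdef]
      field_simp
      ring
    rw [hcomb, hGc, hGd] at this
    nlinarith [hG1, ha]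
  refine ⟨c, ⟨hcmem, hc⟩, ?_⟩
  intro y hy
  rcases lt_trichotomy y c with h | h | h
  · exact absurd (key y c hy.1 hcmem hy.2 hc h) (fun H => H)
  · exact h
  · exact absurd (key c y hcmem hy.1 hc hy.2 h) (fun H => H)
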